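/- Let n ≥ 10, C > 0, R₁ > 0 and R₂ ≥ 30·R₁. For x, z ∈ ℝ and y ∈ ℝⁿ define h^{sg}(x,z;y) = (C/n)·[ -(1/2)·yᵀ((1/n²)·I_n + A)y + b_{x,z}ᵀ y ] with b_{x,z} = x·e₁ - (1/2)·z·e_n. Then for every x, z with |x| ≤ R₁ and |z| ≤ R₁, the maximum of h^{sg}(x,z;·) over the hypercube {y ∈ ℝⁿ : ‖y‖_∞ ≤ n·R₂} equals its supremum over all of ℝⁿ, namely (C/(2n))·b_{x,z}ᵀ ((1/n²)·I_n + A)^{-1} b_{x,z}. -/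

import Mathlib

open Matrix

/-- The `n × n` tridiagonal matrix with `A 1 1 = A n n = 1`, diagonal `2` otherwise,
off-diagonal entries `-1`, and all other entries `0` (0-indexed in Lean). -/
noncomputable def triA (n : ℕ) : Matrix (Fin n) (Fin n) ℝ :=
  Matrix.of fun i j =>
    if i = j then (if (i : ℕ) = 0 ∨ (i : ℕ) = n - 1 then 1 else 2)
    else if (i : ℕ) + 1 = (j : ℕ) ∨ (j : ℕ) + 1 = (i : ℕ) then -1 else 0

/-- `b_{x,z} = x·e₁ - (1/2)·z·eₙ`. -/
noncomputable def bvec (n : ℕ) (x z : ℝ) : Fin n → ℝ := fun i =>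
  if (i : ℕ) = 0 then x else if (i : ℕ) = n - 1 then -(1 / 2) * z else 0

/-- `h^{sg}(x, z; y) = (C/n)·[-(1/2)·yᵀ((1/n²)I + A)y + b_{x,z}ᵀ y]`. -/
noncomputable def hsg (n : ℕ) (C x z : ℝ) (y : Fin n → ℝ) : ℝ :=
  (C / n) * (-(1 / 2) * (y ⬝ᵥ ((((n : ℝ) ^ 2)⁻¹ • (1 : Matrix (Fin n) (Fin n) ℝ)
      + triA n).mulVec y)) + bvec n x z ⬝ᵥ y)

open Finset

noncomputable def aent (n i j : ℕ) : ℝ :=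
  if i = j then (if i = 0 ∨ i = n - 1 then 1 else 2)
  else if i + 1 = j ∨ j + 1 = i then -1 else 0

lemma quad_id (n : ℕ) (hn : 2 ≤ n) (Y : ℕ → ℝ) :
    ∑ i ∈ range n, ∑ j ∈ range n, aent n i j * Y i * Y j
      = ∑ k ∈ range (n-1), (Y (k+1) - Y k)^2 := by
  induction n, hn using Nat.le_induction with
  | base => simp [aent, Finset.sum_range_succ]; ring
  | succ n hn ih =>
    have h1 : ∀ i < n, ∀ j < n, (i ≠ n-1 ∨ j ≠ n-1) →
        aent (n+1) i j = aent n i j := by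
      intro i hi j hj hij
      by_cases h : i = j
      · subst h
        have hii : i ≠ n - 1 := by tauto
        have he : (i = 0 ∨ i = (n+1)-1) ↔ (i = 0 ∨ i = n-1) := by omega
        simp only [aent, if_pos rfl, he]
      · simp [aent, h]
    have hcc : aent (n+1) (n-1) (n-1) = 2 := by
      unfold aent; split_ifs <;> first | rfl | omega | (exfalso; omega)
    have hcn : aent n (n-1) (n-1) = 1 := by
      unfold aent; split_ifs <;> first | rfl | omega | (exfalso; omega)
    have hrow : ∀ j < n, aent (n+1) n j = if j = n-1 then -1 else 0 := by
      intro j hj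
      unfold aent; split_ifs <;> first | rfl | omega | (exfalso; omega)
    have hcol : ∀ i < n, aent (n+1) i n = if i = n-1 then -1 else 0 := by
      intro i hi
      unfold aent; split_ifs <;> first | rfl | omega | (exfalso; omega)
    have hnn : aent (n+1) n n = 1 := by simp [aent]
    have hmem : n - 1 ∈ range n := by simp; omega
    have hinner : ∑ i ∈ range n, ∑ j ∈ range n, aent (n+1) i j * Y i * Y j
        = (∑ i ∈ range n, ∑ j ∈ range n, aent n i j * Y i * Y j) + Y (n-1)^2 := by
      have key : ∀ i ∈ range n, ∑ j ∈ range n, aent (n+1) i j * Y i * Y j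
          = (∑ j ∈ range n, aent n i j * Y i * Y j)
            + (if i = n-1 then Y (n-1)^2 else 0) := by
        intro i hi
        rw [mem_range] at hi
        by_cases h : i = n-1
        · subst h
          rw [if_pos rfl]
          have key2 : ∀ j ∈ range n, aent (n+1) (n-1) j * Y (n-1) * Y j
              = aent n (n-1) j * Y (n-1) * Y j + (if j = n-1 then Y (n-1)^2 else 0) := by
            intro j hj; rw [mem_range] at hj
            by_cases h : j = n-1
            · subst h; rw [hcc, hcn, if_pos rfl]; ring
            · rw [h1 _ hi _ hj (Or.inr h), if_neg h, add_zero]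
          rw [Finset.sum_congr rfl key2, Finset.sum_add_distrib,
            Finset.sum_ite_eq' (range n) (n-1) (fun _ => Y (n-1)^2), if_pos hmem]
        · simp only [h, ite_false, add_zero]
          apply Finset.sum_congr rfl
          intro j hj
          rw [mem_range] at hj
          rw [h1 i hi j hj (Or.inl h)]
      rw [Finset.sum_congr rfl key, Finset.sum_add_distrib,
        Finset.sum_ite_eq' (range n) (n-1) (fun _ => Y (n-1)^2), if_pos hmem]
    -- boundary sums
    have hrowsum : ∑ j ∈ range n, aent (n+1) n j * Y n * Y j = -(Y (n-1) * Y n) := by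
      have : ∀ j ∈ range n, aent (n+1) n j * Y n * Y j
          = (if j = n-1 then -(Y (n-1) * Y n) else 0) := by
        intro j hj; rw [mem_range] at hj
        rw [hrow j hj]
        by_cases h : j = n-1 <;> simp [h] <;> ring
      rw [Finset.sum_congr rfl this,
        Finset.sum_ite_eq' (range n) (n-1) (fun _ => -(Y (n-1) * Y n)), if_pos hmem]
    have hcolsum : ∑ i ∈ range n, aent (n+1) i n * Y i * Y n = -(Y (n-1) * Y n) := by
      have : ∀ i ∈ range n, aent (n+1) i n * Y i * Y n
          = (if i = n-1 then -(Y (n-1) * Y n) else 0) := by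
        intro i hi; rw [mem_range] at hi
        rw [hcol i hi]
        by_cases h : i = n-1 <;> simp [h] <;> ring
      rw [Finset.sum_congr rfl this,
        Finset.sum_ite_eq' (range n) (n-1) (fun _ => -(Y (n-1) * Y n)), if_pos hmem]
    -- assemble
    have expand : ∑ i ∈ range (n+1), ∑ j ∈ range (n+1), aent (n+1) i j * Y i * Y j
        = (∑ i ∈ range n, ∑ j ∈ range n, aent (n+1) i j * Y i * Y j)
          + (∑ i ∈ range n, aent (n+1) i n * Y i * Y n)
          + ((∑ j ∈ range n, aent (n+1) n j * Y n * Y j) + aent (n+1) n n * Y n * Y n) := by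
      rw [Finset.sum_range_succ]
      rw [Finset.sum_range_succ (f := fun j => aent (n+1) n j * Y n * Y j)]
      rw [Finset.sum_congr rfl (fun i (hi : i ∈ range n) =>
        Finset.sum_range_succ (fun j => aent (n+1) i j * Y i * Y j) n)]
      rw [Finset.sum_add_distrib]
    have hr : (n+1) - 1 = (n-1) + 1 := by omega
    rw [expand, hinner, hrowsum, hcolsum, hnn, ih, hr, Finset.sum_range_succ]
    have : n - 1 + 1 = n := by omega
    rw [this]
    ring

noncomputable def Yext (n : ℕ) (y : Fin n → ℝ) (k : ℕ) : ℝ :=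
  if h : k < n then y ⟨k, h⟩ else 0

lemma triA_eq_aent (n : ℕ) (i j : Fin n) : triA n i j = aent n ↑i ↑j := by
  simp [triA, aent, Fin.ext_iff]

lemma Yext_coe (n : ℕ) (y : Fin n → ℝ) (i : Fin n) : Yext n y ↑i = y i := by
  simp [Yext, i.isLt]

lemma triA_quad (n : ℕ) (hn : 2 ≤ n) (y : Fin n → ℝ) :
    y ⬝ᵥ (triA n).mulVec y
      = ∑ k ∈ range (n-1), (Yext n y (k+1) - Yext n y k)^2 := by
  rw [← quad_id n hn (Yext n y)]
  rw [dotProduct]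
  simp only [mulVec, dotProduct, Finset.mul_sum]
  have step1 : ∀ i : Fin n, ∑ j : Fin n, y i * (triA n i j * y j)
      = ∑ j ∈ range n, aent n ↑i j * Yext n y ↑i * Yext n y j := by
    intro i
    rw [← Fin.sum_univ_eq_sum_range (fun j => aent n ↑i j * Yext n y ↑i * Yext n y j) n]
    apply Finset.sum_congr rfl
    intro j _
    rw [triA_eq_aent, Yext_coe, Yext_coe]; ring
  rw [Finset.sum_congr rfl (fun i _ => step1 i)]
  rw [← Fin.sum_univ_eq_sum_range
    (fun i => ∑ j ∈ range n, aent n i j * Yext n y i * Yext n y j) n]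

lemma triA_symm (n : ℕ) : (triA n)ᵀ = triA n := by
  ext i j
  simp only [transpose_apply, triA, of_apply]
  by_cases h : i = j
  · subst h; rfl
  · have h' : ¬ j = i := fun hh => h hh.symm
    simp [h, h', or_comm]

section Main

variable (n : ℕ)

-- the matrix M
noncomputable def Mmat (n : ℕ) : Matrix (Fin n) (Fin n) ℝ :=
  ((n : ℝ) ^ 2)⁻¹ • (1 : Matrix (Fin n) (Fin n) ℝ) + triA n

lemma Mmat_quad (hn : 2 ≤ n) (v : Fin n → ℝ) :
    v ⬝ᵥ (Mmat n).mulVec v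
      = ((n : ℝ)^2)⁻¹ * (∑ i, (v i)^2)
        + ∑ k ∈ range (n-1), (Yext n v (k+1) - Yext n v k)^2 := by
  rw [Mmat, add_mulVec, dotProduct_add, smul_mulVec, one_mulVec,
    dotProduct_smul, triA_quad n hn]
  congr 1
  rw [smul_eq_mul, dotProduct]
  congr 1
  apply Finset.sum_congr rfl
  intro i _
  ring

lemma Mmat_quad_nonneg (hn : 2 ≤ n) (v : Fin n → ℝ) :
    0 ≤ v ⬝ᵥ (Mmat n).mulVec v := by
  rw [Mmat_quad n hn]
  have h1 : 0 ≤ ((n : ℝ)^2)⁻¹ * (∑ i, (v i)^2) := by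
    apply mul_nonneg (by positivity)
    exact Finset.sum_nonneg fun i _ => sq_nonneg _
  have h2 : (0:ℝ) ≤ ∑ k ∈ range (n-1), (Yext n v (k+1) - Yext n v k)^2 :=
    Finset.sum_nonneg fun k _ => sq_nonneg _
  linarith

lemma Mmat_symm : (Mmat n)ᵀ = Mmat n := by
  rw [Mmat, transpose_add, transpose_smul, transpose_one, triA_symm]

lemma Mmat_bilin_symm (u v : Fin n → ℝ) :
    u ⬝ᵥ (Mmat n).mulVec v = v ⬝ᵥ (Mmat n).mulVec u := by
  rw [dotProduct_mulVec, ← mulVec_transpose, Mmat_symm, dotProduct_comm]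

lemma Mmat_posdef (hn : 2 ≤ n) : (Mmat n).PosDef := by
  have hn0 : (0:ℝ) < n := by
    have : (2:ℝ) ≤ n := by exact_mod_cast hn
    linarith
  refine posDef_iff_dotProduct_mulVec.mpr ⟨?_, ?_⟩
  · ext i j
    rw [conjTranspose_apply, star_trivial]
    have := congrFun (congrFun (Mmat_symm n) i) j
    simpa [transpose_apply] using this
  · intro v hv
    have hstar : star v = v := by ext i; simp
    rw [hstar, Mmat_quad n hn]
    have h2 : (0:ℝ) ≤ ∑ k ∈ range (n-1), (Yext n v (k+1) - Yext n v k)^2 :=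
      Finset.sum_nonneg fun k _ => sq_nonneg _
    have h1 : 0 < ((n : ℝ)^2)⁻¹ * (∑ i, (v i)^2) := by
      apply mul_pos (by positivity)
      obtain ⟨i, hi⟩ := Function.ne_iff.mp hv
      apply Finset.sum_pos' (fun j _ => sq_nonneg _)
      refine ⟨i, Finset.mem_univ i, ?_⟩
      have hi' : v i ≠ 0 := hi
      exact lt_of_le_of_ne (sq_nonneg _) (Ne.symm (pow_ne_zero 2 hi'))
    linarith

lemma Mmat_inv (hn : 2 ≤ n) : Mmat n * (Mmat n)⁻¹ = 1 :=
  mul_nonsing_inv _ (isUnit_iff_ne_zero.mpr (Mmat_posdef n hn).det_pos.ne')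
end Main

set_option maxHeartbeats 1000000 in
/-- for `|x|, |z| ≤ R₁` and `R₂ ≥ 30 R₁`, the maximum of `h^{sg}(x,z;·)`
over the hypercube `{y : ‖y‖_∞ ≤ n R₂}` is attained, equals the supremum over all of
`ℝⁿ`, and equals `(C/(2n))·b_{x,z}ᵀ ((1/n²)I + A)⁻¹ b_{x,z}`. -/
theorem stmt_11 (n : ℕ) (hn : 10 ≤ n) (C R1 R2 : ℝ) (hC : 0 < C)
    (hR1 : 0 < R1) (hR2 : 30 * R1 ≤ R2)
    (x z : ℝ) (hx : |x| ≤ R1) (hz : |z| ≤ R1) :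
    ∃ ystar : Fin n → ℝ,
      (∀ i : Fin n, |ystar i| ≤ (n : ℝ) * R2) ∧
      (∀ y : Fin n → ℝ, hsg n C x z y ≤ hsg n C x z ystar) ∧
      hsg n C x z ystar =
        (C / (2 * n)) * (bvec n x z ⬝ᵥ
          ((((n : ℝ) ^ 2)⁻¹ • (1 : Matrix (Fin n) (Fin n) ℝ) + triA n)⁻¹).mulVec
            (bvec n x z)) := by
  have hn2 : 2 ≤ n := by omega
  have hn0 : (0:ℝ) < n := by exact_mod_cast Nat.lt_of_lt_of_le (by norm_num) hn
  set b : Fin n → ℝ := bvec n x z with hbdef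
  set ys : Fin n → ℝ := ((Mmat n)⁻¹).mulVec b with hysdef
  have hMb : (Mmat n).mulVec ys = b := by
    rw [hysdef, mulVec_mulVec, Mmat_inv n hn2, one_mulVec]
  have hby : ∀ y : Fin n → ℝ, b ⬝ᵥ y = y ⬝ᵥ (Mmat n).mulVec ys := by
    intro y; rw [hMb, dotProduct_comm]
  have hsg_eq : ∀ y : Fin n → ℝ, hsg n C x z y
      = (C / n) * (-(1 / 2) * (y ⬝ᵥ (Mmat n).mulVec y) + b ⬝ᵥ y) := fun y => rfl
  have hexp : ∀ y : Fin n → ℝ, (y - ys) ⬝ᵥ (Mmat n).mulVec (y - ys)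
      = y ⬝ᵥ (Mmat n).mulVec y - 2 * (y ⬝ᵥ (Mmat n).mulVec ys)
        + ys ⬝ᵥ (Mmat n).mulVec ys := by
    intro y
    rw [mulVec_sub, dotProduct_sub, sub_dotProduct, sub_dotProduct,
      Mmat_bilin_symm n ys y]
    ring
  have hCn : 0 < C / n := div_pos hC hn0
  -- maximality
  have hmax : ∀ y : Fin n → ℝ, hsg n C x z y ≤ hsg n C x z ys := by
    intro y
    rw [hsg_eq y, hsg_eq ys, hby y, hby ys]
    have h0 := Mmat_quad_nonneg n hn2 (y - ys)
    rw [hexp y] at h0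
    nlinarith [mul_nonneg hCn.le h0]
  -- value
  have hval : hsg n C x z ys
      = (C / (2 * n)) * (b ⬝ᵥ ((Mmat n)⁻¹).mulVec b) := by
    rw [hsg_eq ys, ← hysdef, ← hby ys]
    have hb : b ⬝ᵥ ys = ys ⬝ᵥ (Mmat n).mulVec ys := hby ys
    rw [hb]
    field_simp
    ring
  -- the bound
  set E : ℝ := ys ⬝ᵥ (Mmat n).mulVec ys with hEdef
  set S : ℝ := ∑ i, (ys i)^2 with hSdef
  set Q : ℝ := ∑ k ∈ range (n-1), (Yext n ys (k+1) - Yext n ys k)^2 with hQdef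
  have hEq : E = ((n:ℝ)^2)⁻¹ * S + Q := Mmat_quad n hn2 ys
  have hE0 : 0 ≤ E := Mmat_quad_nonneg n hn2 ys
  have hS0 : 0 ≤ S := Finset.sum_nonneg fun i _ => sq_nonneg _
  have hQ0 : 0 ≤ Q := Finset.sum_nonneg fun k _ => sq_nonneg _
  have hinv0 : 0 < ((n:ℝ)^2)⁻¹ := by positivity
  have hQE : Q ≤ E := by nlinarith
  have hSE : S ≤ (n:ℝ)^2 * E := by
    have h1 : ((n:ℝ)^2)⁻¹ * S ≤ E := by nlinarith
    calc S = (n:ℝ)^2 * (((n:ℝ)^2)⁻¹ * S) := by field_simp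
    _ ≤ (n:ℝ)^2 * E := by nlinarith
  -- minimal coordinate
  obtain ⟨k, -, hk⟩ := Finset.exists_min_image (univ : Finset (Fin n))
    (fun i => (ys i)^2) ⟨⟨0, by omega⟩, mem_univ _⟩
  have hkS : (n:ℝ) * (ys k)^2 ≤ S := by
    have h := Finset.card_nsmul_le_sum (univ : Finset (Fin n))
      (fun i => (ys i)^2) ((ys k)^2) (fun i _ => hk i (mem_univ i))
    simpa [card_univ, nsmul_eq_mul] using h
  have hkE : (ys k)^2 ≤ (n:ℝ) * E := by
    have : (n:ℝ) * (ys k)^2 ≤ (n:ℝ)^2 * E := le_trans hkS hSE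
    nlinarith
  have hsqnE : (0:ℝ) ≤ (n:ℝ) * E := by positivity
  have hkabs : |ys k| ≤ Real.sqrt ((n:ℝ) * E) := by
    rw [← Real.sqrt_sq_eq_abs]
    exact Real.sqrt_le_sqrt hkE
  -- chaining
  set T : ℝ := ∑ t ∈ range (n-1), |Yext n ys (t+1) - Yext n ys t| with hTdef
  have hT0 : 0 ≤ T := Finset.sum_nonneg fun t _ => abs_nonneg _
  have hT2 : T^2 ≤ (n:ℝ) * Q := by
    have hcs := sq_sum_le_card_mul_sum_sq
      (s := range (n-1)) (f := fun t => |Yext n ys (t+1) - Yext n ys t|)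
    have hcard : ((range (n-1)).card : ℝ) ≤ (n:ℝ) := by
      simp only [card_range]
      exact_mod_cast Nat.sub_le n 1
    have habs2 : ∑ t ∈ range (n-1), |Yext n ys (t+1) - Yext n ys t|^2 = Q := by
      apply Finset.sum_congr rfl; intro t _; rw [sq_abs]
    calc T^2 ≤ ((range (n-1)).card : ℝ) * ∑ t ∈ range (n-1),
          |Yext n ys (t+1) - Yext n ys t|^2 := hcs
    _ = ((range (n-1)).card : ℝ) * Q := by rw [habs2]
    _ ≤ (n:ℝ) * Q := by nlinarith
  have hTsqrt : T ≤ Real.sqrt ((n:ℝ) * E) := by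
    have h1 : T ≤ Real.sqrt ((n:ℝ) * Q) := by
      calc T = Real.sqrt (T^2) := (Real.sqrt_sq hT0).symm
      _ ≤ Real.sqrt ((n:ℝ) * Q) := Real.sqrt_le_sqrt hT2
    have h2 : Real.sqrt ((n:ℝ) * Q) ≤ Real.sqrt ((n:ℝ) * E) :=
      Real.sqrt_le_sqrt (mul_le_mul_of_nonneg_left hQE hn0.le)
    linarith
  have hchain0 : ∀ i : Fin n, |ys i - Yext n ys 0| ≤ T := by
    intro i
    have htel : Yext n ys ↑i - Yext n ys 0
        = ∑ t ∈ range ↑i, (Yext n ys (t+1) - Yext n ys t) :=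
      (Finset.sum_range_sub (fun t => Yext n ys t) ↑i).symm
    rw [← Yext_coe n ys i, htel]
    calc |∑ t ∈ range ↑i, (Yext n ys (t+1) - Yext n ys t)|
        ≤ ∑ t ∈ range ↑i, |Yext n ys (t+1) - Yext n ys t| :=
          Finset.abs_sum_le_sum_abs _ _
    _ ≤ T := Finset.sum_le_sum_of_subset_of_nonneg
        (Finset.range_subset_range.mpr (by omega)) (fun t _ _ => abs_nonneg _)
  have hbnd : ∀ i : Fin n, |ys i| ≤ 3 * Real.sqrt ((n:ℝ) * E) := by
    intro i
    have h1 := hchain0 i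
    have h2 := hchain0 k
    have : |ys i| ≤ |ys k| + (|ys i - Yext n ys 0| + |Yext n ys 0 - ys k|) := by
      have := abs_sub_abs_le_abs_sub (ys i) (ys k)
      have h3 : |ys i - ys k| ≤ |ys i - Yext n ys 0| + |Yext n ys 0 - ys k| :=
        abs_sub_le _ _ _
      linarith [abs_sub_abs_le_abs_sub (ys i) (ys k)]
    have h4 : |Yext n ys 0 - ys k| = |ys k - Yext n ys 0| := abs_sub_comm _ _
    linarith [hkabs, hTsqrt, h1, h2, this, h4.le, h4.ge]
  -- energy bound
  have hbabs : ∀ i : Fin n, |b i| ≤ (if i = (⟨0, by omega⟩ : Fin n) then |x| else 0)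
      + (if i = (⟨n-1, by omega⟩ : Fin n) then |z|/2 else 0) := by
    intro i
    by_cases h0 : (i : ℕ) = 0
    · have hi : i = (⟨0, by omega⟩ : Fin n) := Fin.ext h0
      have hne : ¬ i = (⟨n-1, by omega⟩ : Fin n) := by
        intro hcon; rw [hcon] at h0; simp at h0; omega
      rw [if_pos hi, if_neg hne, add_zero]
      have hb : b i = x := by rw [hbdef]; unfold bvec; rw [if_pos h0]
      rw [hb]
    · by_cases h1 : (i : ℕ) = n - 1
      · have hi : i = (⟨n-1, by omega⟩ : Fin n) := Fin.ext h1
        have hne : ¬ i = (⟨0, by omega⟩ : Fin n) := by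
          intro hcon; rw [hcon] at h1; simp at h1; omega
        rw [if_pos hi, if_neg hne, zero_add]
        have hb : b i = -(1/2) * z := by
          rw [hbdef]; unfold bvec; rw [if_neg h0, if_pos h1]
        have h12 : |(-(1/2) : ℝ)| = 1/2 := by norm_num
        rw [hb, abs_mul, h12]
        linarith [abs_nonneg z]
      · have hne0 : ¬ i = (⟨0, by omega⟩ : Fin n) := by
          intro hcon; rw [hcon] at h0; simp at h0
        have hne1 : ¬ i = (⟨n-1, by omega⟩ : Fin n) := by
          intro hcon; rw [hcon] at h1; simp at h1
        rw [if_neg hne0, if_neg hne1, add_zero]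
        have hb : b i = 0 := by rw [hbdef]; unfold bvec; rw [if_neg h0, if_neg h1]
        rw [hb, abs_zero]
  have hsumb : ∑ i, |b i| ≤ |x| + |z|/2 := by
    calc ∑ i, |b i| ≤ ∑ i : Fin n, ((if i = (⟨0, by omega⟩ : Fin n) then |x| else 0)
        + (if i = (⟨n-1, by omega⟩ : Fin n) then |z|/2 else 0)) :=
        Finset.sum_le_sum fun i _ => hbabs i
    _ = |x| + |z|/2 := by
        rw [Finset.sum_add_distrib, Finset.sum_ite_eq' univ _ (fun _ => |x|),
          Finset.sum_ite_eq' univ _ (fun _ => |z|/2)]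
        simp
  have hEb : E ≤ (|x| + |z|/2) * (3 * Real.sqrt ((n:ℝ) * E)) := by
    have h1 : E = b ⬝ᵥ ys := by rw [hby ys, hEdef]
    have h2 : b ⬝ᵥ ys ≤ ∑ i, |b i| * (3 * Real.sqrt ((n:ℝ) * E)) := by
      calc b ⬝ᵥ ys ≤ |b ⬝ᵥ ys| := le_abs_self _
      _ ≤ ∑ i, |b i * ys i| := Finset.abs_sum_le_sum_abs _ _
      _ ≤ ∑ i, |b i| * (3 * Real.sqrt ((n:ℝ) * E)) := by
          apply Finset.sum_le_sum
          intro i _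
          rw [abs_mul]
          exact mul_le_mul_of_nonneg_left (hbnd i) (abs_nonneg _)
    have h3 : ∑ i, |b i| * (3 * Real.sqrt ((n:ℝ) * E))
        = (∑ i, |b i|) * (3 * Real.sqrt ((n:ℝ) * E)) := by
      rw [← Finset.sum_mul]
    have h4 : (0:ℝ) ≤ 3 * Real.sqrt ((n:ℝ) * E) := by positivity
    calc E = b ⬝ᵥ ys := h1
    _ ≤ (∑ i, |b i|) * (3 * Real.sqrt ((n:ℝ) * E)) := by rw [← h3]; exact h2
    _ ≤ (|x| + |z|/2) * (3 * Real.sqrt ((n:ℝ) * E)) :=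
        mul_le_mul_of_nonneg_right hsumb h4
  -- solve for sqrt E
  have hsqrtE : Real.sqrt E ≤ (9/2) * R1 * Real.sqrt n := by
    have hsplit : Real.sqrt ((n:ℝ) * E) = Real.sqrt n * Real.sqrt E :=
      Real.sqrt_mul (le_of_lt hn0) E
    have hsq : Real.sqrt E ^ 2 = E := Real.sq_sqrt hE0
    have hs0 : 0 ≤ Real.sqrt E := Real.sqrt_nonneg _
    have hsn0 : 0 ≤ Real.sqrt n := Real.sqrt_nonneg _
    have hxz : |x| + |z|/2 ≤ (3/2) * R1 := by linarith
    rw [hsplit] at hEb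
    have hc0 : (0:ℝ) ≤ 9/2 * R1 * Real.sqrt n := by positivity
    have h5 : E ≤ 9/2 * R1 * (Real.sqrt n * Real.sqrt E) := by
      nlinarith [mul_nonneg hsn0 hs0]
    nlinarith [h5, hsq, hs0, hc0]
  -- final bound
  have hfinal : ∀ i : Fin n, |ys i| ≤ (n:ℝ) * R2 := by
    intro i
    have h1 := hbnd i
    have hsplit : Real.sqrt ((n:ℝ) * E) = Real.sqrt n * Real.sqrt E :=
      Real.sqrt_mul (le_of_lt hn0) E
    have hnn : Real.sqrt n * Real.sqrt n = n := Real.mul_self_sqrt (le_of_lt hn0)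
    have hsn0 : 0 ≤ Real.sqrt n := Real.sqrt_nonneg _
    have h2 : |ys i| ≤ 3 * (Real.sqrt n * ((9/2) * R1 * Real.sqrt n)) := by
      rw [hsplit] at h1
      nlinarith [hsqrtE, hsn0]
    have h3 : 3 * (Real.sqrt n * ((9/2) * R1 * Real.sqrt n)) = (27/2) * R1 * n := by
      nlinarith [hnn]
    rw [h3] at h2
    nlinarith [hn0, hR1, hR2]
  have hM : ((((n : ℝ) ^ 2)⁻¹ • (1 : Matrix (Fin n) (Fin n) ℝ) + triA n)) = Mmat n := rfl
  refine ⟨ys, hfinal, hmax, ?_⟩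
  rw [hM]
  exact hval
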